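/- As the real parameter λ tends to infinity (through λ ≥ 2), the quantity 1 − (1 + Σ_{q=1}^{∞} Π_{r=1}^{q} λ/(r·(λ − 1) + 1))^{−1} tends to 1 − 1/e, where the series converges for every λ ≥ 2. -/

import Mathlib

open Finset Filter

private lemma prod_Icc_cast_factorial (n : ℕ) :
    ∏ r ∈ Finset.Icc 1 n, (r : ℝ) = (Nat.factorial n : ℝ) := by
  induction n with
  | zero => simp
  | succ n ih =>
    rw [Finset.prod_Icc_succ_top (by omega), ih, Nat.factorial_succ]
    push_cast; ring

private lemma bound_lemma {l : ℝ} (hl : 2 ≤ l) (q : ℕ) :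
    ∏ r ∈ Finset.Icc 1 (q + 1), l / ((r : ℝ) * (l - 1) + 1)
      ≤ 2 ^ (q + 1) / (Nat.factorial (q+1) : ℝ) := by
  have h1 : (1 : ℝ) ≤ l - 1 := by linarith
  calc ∏ r ∈ Finset.Icc 1 (q + 1), l / ((r : ℝ) * (l - 1) + 1)
      ≤ ∏ r ∈ Finset.Icc 1 (q + 1), 2 / (r : ℝ) := by
        apply Finset.prod_le_prod
        · intro r hr
          have : (0:ℝ) < r := by
            have := (Finset.mem_Icc.mp hr).1; exact_mod_cast Nat.lt_of_lt_of_le Nat.zero_lt_one this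
          positivity
        · intro r hr
          have hr1 : (1:ℝ) ≤ r := by exact_mod_cast (Finset.mem_Icc.mp hr).1
          have hrpos : (0:ℝ) < r := by linarith
          have hdpos : (0:ℝ) < (r : ℝ) * (l - 1) + 1 := by nlinarith
          rw [div_le_div_iff₀ hdpos hrpos]
          nlinarith
    _ = 2 ^ (q + 1) / (Nat.factorial (q+1) : ℝ) := by
        rw [Finset.prod_div_distrib, Finset.prod_const, prod_Icc_cast_factorial,
          Nat.card_Icc]
        norm_num

private lemma bound_summable : Summable (fun q : ℕ => (2:ℝ) ^ (q + 1) / (Nat.factorial (q+1) : ℝ)) := by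
  have := Real.summable_pow_div_factorial 2
  exact (summable_nat_add_iff 1).mpr this

private lemma nonneg_lemma {l : ℝ} (hl : 2 ≤ l) (q : ℕ) :
    0 ≤ ∏ r ∈ Finset.Icc 1 (q + 1), l / ((r : ℝ) * (l - 1) + 1) := by
  apply Finset.prod_nonneg
  intro r hr
  have hr1 : (1:ℝ) ≤ r := by exact_mod_cast (Finset.mem_Icc.mp hr).1
  have : (0:ℝ) < (r : ℝ) * (l - 1) + 1 := by nlinarith
  positivity

private lemma factor_tendsto (r : ℕ) (hr : 1 ≤ r) :
    Filter.Tendsto (fun l : ℝ => l / ((r : ℝ) * (l - 1) + 1)) Filter.atTop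
      (nhds ((r : ℝ)⁻¹)) := by
  have hr0 : (0:ℝ) < r := by exact_mod_cast hr
  have h1 : Filter.Tendsto (fun l : ℝ => (r : ℝ) + (1 - r) * l⁻¹) Filter.atTop
      (nhds ((r : ℝ))) := by
    have := tendsto_inv_atTop_zero.const_mul ((1:ℝ) - r)
    simpa using tendsto_const_nhds.add this
  have h2 : Filter.Tendsto (fun l : ℝ => ((r : ℝ) + (1 - r) * l⁻¹)⁻¹) Filter.atTop
      (nhds ((r : ℝ)⁻¹)) := h1.inv₀ (ne_of_gt hr0)
  apply h2.congr'
  filter_upwards [eventually_gt_atTop (0:ℝ)] with l hl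
  have hl0 : l ≠ 0 := ne_of_gt hl
  have key : ((r:ℝ) + (1 - r) * l⁻¹) = ((r:ℝ) * (l - 1) + 1) / l := by
    field_simp; ring
  rw [key, inv_div]

theorem stmt_13 :
    (∀ l : ℝ, 2 ≤ l →
      Summable (fun q : ℕ =>
        ∏ r ∈ Finset.Icc 1 (q + 1), l / ((r : ℝ) * (l - 1) + 1))) ∧
    Filter.Tendsto
      (fun l : ℝ =>
        1 - (1 + ∑' q : ℕ, ∏ r ∈ Finset.Icc 1 (q + 1), l / ((r : ℝ) * (l - 1) + 1))⁻¹)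
      Filter.atTop (nhds (1 - 1 / Real.exp 1)) := by
  constructor
  · intro l hl
    apply Summable.of_nonneg_of_le (nonneg_lemma hl) (bound_lemma hl) bound_summable
  · have hfac : Summable (fun n : ℕ => (Nat.factorial n : ℝ)⁻¹) := by
      simpa using Real.summable_pow_div_factorial 1
    have hval : ∑' q : ℕ, (Nat.factorial (q + 1) : ℝ)⁻¹ = Real.exp 1 - 1 := by
      have h0 : ∑' n : ℕ, (Nat.factorial n : ℝ)⁻¹ = Real.exp 1 := by
        rw [Real.exp_eq_exp_ℝ, NormedSpace.exp_eq_tsum ℝ]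
        simp
      have h1 := Summable.tsum_eq_zero_add hfac
      rw [h0] at h1
      simp only [Nat.factorial_zero, Nat.cast_one, inv_one] at h1
      linarith
    have hg : ∀ q : ℕ,
        Filter.Tendsto (fun l : ℝ => ∏ r ∈ Finset.Icc 1 (q + 1), l / ((r : ℝ) * (l - 1) + 1))
          Filter.atTop (nhds ((Nat.factorial (q + 1) : ℝ)⁻¹)) := by
      intro q
      have h := tendsto_finset_prod (Finset.Icc 1 (q + 1))
        (fun r hr => factor_tendsto r (Finset.mem_Icc.mp hr).1)
      have heq : ∏ r ∈ Finset.Icc 1 (q + 1), (r : ℝ)⁻¹ = (Nat.factorial (q + 1) : ℝ)⁻¹ := by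
        rw [Finset.prod_inv_distrib, prod_Icc_cast_factorial]
      rwa [heq] at h
    have htsum : Filter.Tendsto
        (fun l : ℝ => ∑' q : ℕ, ∏ r ∈ Finset.Icc 1 (q + 1), l / ((r : ℝ) * (l - 1) + 1))
        Filter.atTop (nhds (Real.exp 1 - 1)) := by
      rw [← hval]
      apply tendsto_tsum_of_dominated_convergence bound_summable hg
      filter_upwards [eventually_ge_atTop (2:ℝ)] with l hl q
      rw [Real.norm_eq_abs, abs_of_nonneg (nonneg_lemma hl q)]
      exact bound_lemma hl q
    have hne : (1 : ℝ) + (Real.exp 1 - 1) ≠ 0 := by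
      have := Real.exp_pos 1; intro h; nlinarith
    have := ((tendsto_const_nhds.add htsum).inv₀ hne).const_sub 1
    convert this using 2
    field_simp
    ring
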